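/- arXiv:2307.03922 — 2 statements merged into one kernel-verified Lean document; each statement's English description precedes it below -/
import Mathlib

section
/- (Sperner bound on the number of vertex optimal designs.) The set of extreme points of P⋆ is finite, and its cardinality ℓ satisfies ℓ ≤ C(d, ⌊d/2⌋), the binomial coefficient 'd choose ⌊d/2⌋'. -/
open Matrix BigOperators

noncomputable section

/-- The information matrix `M(w) = ∑ i, wᵢ fᵢ fᵢᵀ`. -/
def infoM {d m : ℕ} (f : Fin d → Fin m → ℝ) (w : Fin d → ℝ) :
    Matrix (Fin m) (Fin m) ℝ :=
  ∑ i, w i • Matrix.vecMulVec (f i) (f i)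

/-- The probability simplex `P ⊆ ℝ^d`. -/
def simplexP (d : ℕ) : Set (Fin d → ℝ) :=
  {w | (∀ i, 0 ≤ w i) ∧ ∑ i, w i = 1}

/-- The polytope of optimal weights `P⋆ = {w ∈ P : M(w) = M⋆}`. -/
def Pstar {d m : ℕ} (f : Fin d → Fin m → ℝ)
    (Mstar : Matrix (Fin m) (Fin m) ℝ) : Set (Fin d → ℝ) :=
  {w | w ∈ simplexP d ∧ infoM f w = Mstar}

/-- `s`, the dimension of the linear span of `{f₁f₁ᵀ, …, f_d f_dᵀ}`. -/
def spanDim {d m : ℕ} (f : Fin d → Fin m → ℝ) : ℕ :=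
  Module.finrank ℝ (Submodule.span ℝ (Set.range fun i => Matrix.vecMulVec (f i) (f i)))

/-- `v` is an extreme point of the convex set `K`: `v ∈ K`, and whenever
`v = α • w₁ + (1 - α) • w₂` with `w₁, w₂ ∈ K` and `α ∈ (0,1)`, then `w₁ = w₂ = v`. -/
def IsExtremePt {E : Type*} [AddCommGroup E] [Module ℝ E] (K : Set E) (v : E) : Prop :=
  v ∈ K ∧ ∀ w₁ ∈ K, ∀ w₂ ∈ K, ∀ α : ℝ, 0 < α → α < 1 →
    v = α • w₁ + (1 - α) • w₂ → w₁ = v ∧ w₂ = v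

/-- The support `S(w) = {i : wᵢ ≠ 0}`. -/
def supp {d : ℕ} (w : Fin d → ℝ) : Set (Fin d) := {i | w i ≠ 0}

lemma infoM_add {d m : ℕ} (f : Fin d → Fin m → ℝ) (a b : Fin d → ℝ) :
    infoM f (a + b) = infoM f a + infoM f b := by
  simp [infoM, add_smul, Finset.sum_add_distrib]

lemma infoM_sub {d m : ℕ} (f : Fin d → Fin m → ℝ) (a b : Fin d → ℝ) :
    infoM f (a - b) = infoM f a - infoM f b := by
  simp [infoM, sub_smul, Finset.sum_sub_distrib]

lemma infoM_smul {d m : ℕ} (f : Fin d → Fin m → ℝ) (c : ℝ) (a : Fin d → ℝ) :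
    infoM f (c • a) = c • infoM f a := by
  simp [infoM, smul_smul, Finset.smul_sum]

lemma key {d m : ℕ} (hd : 0 < d) (f : Fin d → Fin m → ℝ)
    (Mstar : Matrix (Fin m) (Fin m) ℝ) {v v' : Fin d → ℝ}
    (hv : IsExtremePt (Pstar f Mstar) v) (hv' : IsExtremePt (Pstar f Mstar) v')
    (hsub : supp v ⊆ supp v') : v = v' := by
  have hne : (Finset.univ : Finset (Fin d)).Nonempty := by
    have : Nonempty (Fin d) := ⟨⟨0, hd⟩⟩
    exact Finset.univ_nonempty
  obtain ⟨⟨hv0, hvs⟩, hvM⟩ := hv.1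
  obtain ⟨⟨hv'0, hv's⟩, hv'M⟩ := hv'.1
  set u : Fin d → ℝ := v - v' with hu
  -- if u i ≠ 0 then v' i > 0
  have hpos : ∀ i, u i ≠ 0 → 0 < v' i := by
    intro i hi
    rcases eq_or_ne (v i) 0 with h0 | h0
    · have : v' i ≠ 0 := by
        intro h; apply hi; simp [hu, h0, h]
      exact lt_of_le_of_ne (hv'0 i) (Ne.symm this)
    · have : i ∈ supp v' := hsub h0
      exact lt_of_le_of_ne (hv'0 i) (Ne.symm this)
  set g : Fin d → ℝ := fun i => if u i = 0 then 1 else v' i / (2 * |u i|) with hg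
  set ε : ℝ := Finset.univ.inf' hne g with hε
  have hεpos : 0 < ε := by
    rw [hε, Finset.lt_inf'_iff]
    intro i _
    rw [hg]
    by_cases h : u i = 0
    · simp [h]
    · simp only [h, if_false]
      exact div_pos (hpos i h) (by positivity)
  have hbound : ∀ i, ε * |u i| ≤ v' i / 2 ∨ u i = 0 := by
    intro i
    by_cases h : u i = 0
    · right; exact h
    · left
      have hle : ε ≤ g i := Finset.inf'_le g (Finset.mem_univ i)
      rw [hg] at hle
      simp only [h, if_false] at hle
      have h2 : (0:ℝ) < 2 * |u i| := by positivity
      rw [le_div_iff₀ h2] at hle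
      nlinarith [abs_nonneg (u i)]
  -- nonnegativity of perturbations
  have hnn : ∀ (s : ℝ), |s| = 1 → ∀ i, 0 ≤ v' i + s * (ε * u i) := by
    intro s hs i
    rcases hbound i with h | h
    · have h1 : |s * (ε * u i)| ≤ v' i / 2 := by
        rw [abs_mul, hs, one_mul, abs_mul, abs_of_pos hεpos]
        exact h
      have h2 : -(v' i / 2) ≤ s * (ε * u i) := neg_le_of_abs_le h1
      have h3 : 0 < v' i ∨ u i = 0 := by
        by_cases hu0 : u i = 0
        · right; exact hu0
        · left; exact hpos i hu0
      rcases h3 with h3 | h3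
      · linarith
      · simp [h3]; exact hv'0 i
    · simp [h]; exact hv'0 i
  -- membership of perturbations
  have hmem : ∀ (s : ℝ), |s| = 1 → (v' + (s * ε) • u) ∈ Pstar f Mstar := by
    intro s hs
    refine ⟨⟨fun i => ?_, ?_⟩, ?_⟩
    · have := hnn s hs i
      simpa [mul_assoc] using this
    · have : ∑ i, u i = 0 := by
        simp [hu, Finset.sum_sub_distrib, hvs, hv's]
      simp [Finset.sum_add_distrib, hv's, ← Finset.mul_sum, this]
    · rw [infoM_add, infoM_smul, hu, infoM_sub, hvM, hv'M]
      simp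
  have h1 := hmem 1 (by norm_num)
  have h2 := hmem (-1) (by norm_num)
  have hcomb : v' = (1/2 : ℝ) • (v' + ((1:ℝ) * ε) • u) + (1 - 1/2 : ℝ) • (v' + ((-1:ℝ) * ε) • u) := by
    funext i
    simp only [Pi.add_apply, Pi.smul_apply, smul_eq_mul]
    ring
  obtain ⟨he, _⟩ := hv'.2 _ h1 _ h2 (1/2) (by norm_num) (by norm_num) hcomb
  have : ((1:ℝ) * ε) • u = 0 := by
    have := he
    rwa [add_eq_left] at this
  have hu0 : u = 0 := by
    have hε0 : (1:ℝ) * ε ≠ 0 := by positivity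
    exact (smul_eq_zero.mp this).resolve_left hε0
  have : v - v' = 0 := hu0
  exact sub_eq_zero.mp this

/-- Sperner bound: the set of extreme points of `P⋆` is finite and
its cardinality is at most `C(d, ⌊d/2⌋)`. -/
theorem stmt13 (d m : ℕ) (hd : 0 < d) (hm : 0 < m)
    (f : Fin d → Fin m → ℝ) (Mstar : Matrix (Fin m) (Fin m) ℝ) :
    {v | IsExtremePt (Pstar f Mstar) v}.Finite ∧
    {v | IsExtremePt (Pstar f Mstar) v}.ncard ≤ Nat.choose d (d / 2) := by
  classical
  set E : Set (Fin d → ℝ) := {v | IsExtremePt (Pstar f Mstar) v} with hE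
  set sF : (Fin d → ℝ) → Finset (Fin d) :=
    fun w => Finset.univ.filter (fun i => w i ≠ 0) with hsF
  have hsub : ∀ v v' : Fin d → ℝ, sF v ⊆ sF v' → supp v ⊆ supp v' := by
    intro v v' h i hi
    have : i ∈ sF v := by simp [hsF, supp] at hi ⊢; exact hi
    have := h this
    simp [hsF] at this
    exact this
  have hinj : Set.InjOn sF E := by
    intro v hv v' hv' heq
    exact key hd f Mstar hv hv' (hsub v v' (le_of_eq heq))
  have hfin : E.Finite := Set.Finite.of_finite_image (Set.toFinite _) hinj
  refine ⟨hfin, ?_⟩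
  have hanti : IsAntichain (· ⊆ ·) ((sF '' E : Set (Finset (Fin d)))) := by
    rintro _ ⟨v, hv, rfl⟩ _ ⟨v', hv', rfl⟩ hne hss
    exact hne (congrArg sF (key hd f Mstar hv hv' (hsub v v' hss)))
  have hcard : E.ncard = (sF '' E).ncard := (Set.ncard_image_of_injOn hinj).symm
  rw [hcard]
  have hA : (sF '' E).ncard = (sF '' E).toFinset.card := by
    rw [Set.ncard_eq_toFinset_card']
  rw [hA]
  have hanti' : IsAntichain (· ⊆ ·) ((sF '' E).toFinset : Set (Finset (Fin d))) := by
    rwa [Set.coe_toFinset]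
  have := IsAntichain.sperner hanti'
  simpa using this
end
end

section
/- (Lower bound ℓ ≥ t + 1.) Suppose the normalization hypothesis holds (there exist a symmetric m×m real matrix N and c > 0 with fᵢᵀ N fᵢ = c for all i and tr(N M⋆) = c), and suppose there exists w̃ ∈ P⋆ with w̃ᵢ > 0 for every i. Then the number ℓ of extreme points of P⋆ satisfies ℓ ≥ t + 1 = d − s + 1. -/
open Matrix BigOperators

noncomputable section

/-! ### Auxiliary lemmas -/

/-- `infoM` as a linear map. -/
def infoL {d m : ℕ} (f : Fin d → Fin m → ℝ) :
    (Fin d → ℝ) →ₗ[ℝ] Matrix (Fin m) (Fin m) ℝ where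
  toFun w := infoM f w
  map_add' x y := by simp [infoM, add_smul, Finset.sum_add_distrib]
  map_smul' a x := by simp [infoM, smul_smul, Finset.smul_sum]

lemma infoL_apply {d m : ℕ} (f : Fin d → Fin m → ℝ) (w : Fin d → ℝ) :
    infoL f w = infoM f w := rfl

lemma trace_mul_vecMulVec {m : ℕ} (N : Matrix (Fin m) (Fin m) ℝ) (x : Fin m → ℝ) :
    Matrix.trace (N * Matrix.vecMulVec x x) = x ⬝ᵥ N.mulVec x := by
  simp only [Matrix.trace, Matrix.diag, Matrix.mul_apply, Matrix.vecMulVec_apply,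
    dotProduct, Matrix.mulVec, Finset.mul_sum]
  apply Finset.sum_congr rfl; intro j _
  apply Finset.sum_congr rfl; intro k _
  ring

lemma trace_mul_infoM {d m : ℕ} (f : Fin d → Fin m → ℝ) (N : Matrix (Fin m) (Fin m) ℝ)
    (c : ℝ) (hfi : ∀ i, f i ⬝ᵥ N.mulVec (f i) = c) (w : Fin d → ℝ) :
    Matrix.trace (N * infoM f w) = c * ∑ i, w i := by
  unfold infoM
  rw [Matrix.mul_sum, Matrix.trace_sum]
  simp only [Matrix.mul_smul, Matrix.trace_smul, trace_mul_vecMulVec, hfi, smul_eq_mul]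
  rw [Finset.mul_sum]
  exact Finset.sum_congr rfl fun i _ => mul_comm _ _

lemma isExtremePt_iff {E : Type*} [AddCommGroup E] [Module ℝ E] (K : Set E) (v : E) :
    IsExtremePt K v ↔ v ∈ K.extremePoints ℝ := by
  constructor
  · rintro ⟨hv, h⟩
    refine ⟨hv, fun x₁ hx₁ x₂ hx₂ hseg => ?_⟩
    obtain ⟨a, b, ha, hb, hab, hx⟩ := hseg
    exact (h x₁ hx₁ x₂ hx₂ a ha (by linarith)
      (by rw [← hx]; congr 1; rw [show (1:ℝ) - a = b by linarith])).1
  · rintro ⟨hv, h⟩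
    refine ⟨hv, fun x₁ hx₁ x₂ hx₂ a ha ha1 hx => ?_⟩
    exact ⟨h hx₁ hx₂ ⟨a, 1 - a, ha, by linarith, by ring, hx.symm⟩,
      h hx₂ hx₁ ⟨1 - a, a, by linarith, ha, by ring, by rw [hx, add_comm]⟩⟩

lemma sum_eq_zero_of_infoM_eq_zero {d m : ℕ} {f : Fin d → Fin m → ℝ}
    {N : Matrix (Fin m) (Fin m) ℝ} {c : ℝ} (hc : 0 < c)
    (hfi : ∀ i, f i ⬝ᵥ N.mulVec (f i) = c) {u : Fin d → ℝ}
    (hu : infoM f u = 0) : ∑ i, u i = 0 := by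
  have h := trace_mul_infoM f N c hfi u
  rw [hu] at h
  simp only [mul_zero, Matrix.trace_zero] at h
  exact (mul_eq_zero.mp h.symm).resolve_left hc.ne'

section main
variable {d m : ℕ} {f : Fin d → Fin m → ℝ} {Mstar : Matrix (Fin m) (Fin m) ℝ}

lemma mem_Pstar {w : Fin d → ℝ} :
    w ∈ Pstar f Mstar ↔ (∀ i, 0 ≤ w i) ∧ (∑ i, w i = 1) ∧ infoM f w = Mstar := by
  constructor
  · rintro ⟨⟨h1, h2⟩, h3⟩; exact ⟨h1, h2, h3⟩
  · rintro ⟨h1, h2, h3⟩; exact ⟨⟨h1, h2⟩, h3⟩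

lemma perturb_mem {w u : Fin d → ℝ} (hw : w ∈ Pstar f Mstar)
    (hnn : ∀ i, 0 ≤ w i + u i) (hu0 : infoM f u = 0) (hsum : ∑ i, u i = 0) :
    w + u ∈ Pstar f Mstar := by
  rw [mem_Pstar] at hw ⊢
  refine ⟨fun i => hnn i, ?_, ?_⟩
  · simp only [Pi.add_apply, Finset.sum_add_distrib, hw.2.1, hsum, add_zero]
  · rw [← infoL_apply, map_add, infoL_apply, infoL_apply, hw.2.2, hu0, add_zero]

lemma convex_Pstar : Convex ℝ (Pstar f Mstar) := by
  intro w₁ h₁ w₂ h₂ a b ha hb hab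
  rw [mem_Pstar] at h₁ h₂ ⊢
  refine ⟨fun i => add_nonneg (mul_nonneg ha (h₁.1 i)) (mul_nonneg hb (h₂.1 i)), ?_, ?_⟩
  · simp only [Pi.add_apply, Pi.smul_apply, smul_eq_mul, Finset.sum_add_distrib,
      ← Finset.mul_sum, h₁.2.1, h₂.2.1, mul_one, hab]
  · rw [← infoL_apply, map_add, LinearMap.map_smul, LinearMap.map_smul, infoL_apply,
      infoL_apply, h₁.2.2, h₂.2.2, ← add_smul, hab, one_smul]

lemma isClosed_Pstar : IsClosed (Pstar f Mstar) := by
  have h1 : IsClosed {w : Fin d → ℝ | ∀ i, 0 ≤ w i} := by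
    have : {w : Fin d → ℝ | ∀ i, 0 ≤ w i} = ⋂ i, {w | 0 ≤ w i} := by ext w; simp
    rw [this]
    exact isClosed_iInter fun i => isClosed_le continuous_const (continuous_apply i)
  have h2 : IsClosed {w : Fin d → ℝ | ∑ i, w i = 1} :=
    isClosed_eq (continuous_finset_sum _ fun i _ => continuous_apply i) continuous_const
  have h3 : IsClosed {w : Fin d → ℝ | infoM f w = Mstar} := by
    have : {w : Fin d → ℝ | infoM f w = Mstar} = (infoL f) ⁻¹' {Mstar} := rfl
    rw [this]
    exact IsClosed.preimage (infoL f).continuous_of_finiteDimensional isClosed_singleton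
  have : Pstar f Mstar = ({w : Fin d → ℝ | ∀ i, 0 ≤ w i} ∩ {w | ∑ i, w i = 1})
      ∩ {w | infoM f w = Mstar} := by
    ext w; rw [mem_Pstar]; exact ⟨fun ⟨a,b,c⟩ => ⟨⟨a,b⟩,c⟩, fun ⟨⟨a,b⟩,c⟩ => ⟨a,b,c⟩⟩
  rw [this]
  exact ((h1.inter h2).inter h3)

lemma isCompact_Pstar : IsCompact (Pstar f Mstar) := by
  refine IsCompact.of_isClosed_subset (isCompact_Icc (a := (0 : Fin d → ℝ)) (b := 1))
    isClosed_Pstar ?_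
  intro w hw
  rw [mem_Pstar] at hw
  refine ⟨fun i => hw.1 i, fun i => ?_⟩
  calc w i ≤ ∑ j, w j := Finset.single_le_sum (fun j _ => hw.1 j) (Finset.mem_univ i)
  _ = 1 := hw.2.1

lemma range_infoL : LinearMap.range (infoL f)
    = Submodule.span ℝ (Set.range fun i => Matrix.vecMulVec (f i) (f i)) := by
  apply le_antisymm
  · rintro _ ⟨w, rfl⟩
    show infoM f w ∈ _
    unfold infoM
    exact Submodule.sum_mem _ fun i _ =>
      Submodule.smul_mem _ _ (Submodule.subset_span (Set.mem_range_self i))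
  · rw [Submodule.span_le]
    rintro _ ⟨i, rfl⟩
    rw [SetLike.mem_coe, LinearMap.mem_range]
    refine ⟨Pi.single i (1:ℝ), ?_⟩
    show infoM f (Pi.single i 1) = _
    unfold infoM
    rw [Finset.sum_eq_single i]
    · simp
    · intro j _ hj; simp [Pi.single_eq_of_ne hj]
    · simp

end main

/-- under the normalization hypothesis and the existence of `w̃ ∈ P⋆`
with all components positive, the number `ℓ` of extreme points of `P⋆` satisfies
`ℓ ≥ t + 1 = d - s + 1`. -/
theorem stmt16 (d m : ℕ) (hd : 0 < d) (hm : 0 < m)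
    (f : Fin d → Fin m → ℝ) (Mstar : Matrix (Fin m) (Fin m) ℝ)
    (N : Matrix (Fin m) (Fin m) ℝ) (hN : N.IsSymm)
    (c : ℝ) (hc : 0 < c)
    (hfi : ∀ i, f i ⬝ᵥ N.mulVec (f i) = c)
    (htr : Matrix.trace (N * Mstar) = c)
    (wt : Fin d → ℝ) (hwt : wt ∈ Pstar f Mstar) (hpos : ∀ i, 0 < wt i) :
    {v | IsExtremePt (Pstar f Mstar) v}.Finite ∧
    d - spanDim f + 1 ≤ {v | IsExtremePt (Pstar f Mstar) v}.ncard := by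
  classical
  haveI : Nonempty (Fin d) := Fin.pos_iff_nonempty.mp hd
  set K := Pstar f Mstar with hKdef
  set E := K.extremePoints ℝ with hEdef
  have hEeq : {v | IsExtremePt K v} = E := Set.ext fun v => isExtremePt_iff K v
  -- Finiteness: the support map is injective on extreme points.
  have hinj : Set.InjOn supp E := by
    intro v₁ h₁ v₂ h₂ hsupp
    by_contra hne
    set u := v₁ - v₂ with hu
    have hv₁ := mem_Pstar.mp h₁.1
    have hv₂ := mem_Pstar.mp h₂.1
    have hu0 : infoM f u = 0 := by
      rw [← infoL_apply, hu, map_sub, infoL_apply, infoL_apply, hv₁.2.2, hv₂.2.2, sub_self]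
    have hsum : ∑ i, u i = 0 := by
      simp [hu, Finset.sum_sub_distrib, hv₁.2.1, hv₂.2.1]
    have hzero : ∀ i, v₁ i = 0 → u i = 0 := by
      intro i hi
      have h2 : v₂ i = 0 := by
        by_contra h
        have : i ∈ supp v₂ := h
        rw [← hsupp] at this
        exact this hi
      simp [hu, hi, h2]
    set a := Finset.univ.inf' Finset.univ_nonempty
      (fun i => if v₁ i = 0 then 1 else v₁ i) with ha
    have hapos : 0 < a := by
      rw [ha, Finset.lt_inf'_iff]
      intro i _
      by_cases hi : v₁ i = 0
      · simp [hi]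
      · simp only [hi, if_false]
        exact lt_of_le_of_ne (hv₁.1 i) (Ne.symm hi)
    set ε := a / (‖u‖ + 1) with hε
    have hεpos : 0 < ε := div_pos hapos (by positivity)
    have hbound : ∀ i, ε * |u i| ≤ a := by
      intro i
      have h1 : |u i| ≤ ‖u‖ + 1 := by
        have := norm_le_pi_norm u i
        rw [Real.norm_eq_abs] at this
        linarith [norm_nonneg u]
      calc ε * |u i| ≤ ε * (‖u‖ + 1) := by nlinarith
      _ = a := div_mul_cancel₀ _ (by positivity)
    have hmem : ∀ s : ℝ, |s| ≤ ε → v₁ + s • u ∈ K := by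
      intro s hs
      refine perturb_mem h₁.1 ?_ ?_ ?_
      · intro i
        by_cases hi : v₁ i = 0
        · simp [hi, hzero i hi]
        · have hai : a ≤ v₁ i := by
            have := Finset.inf'_le (fun i => if v₁ i = 0 then 1 else v₁ i) (Finset.mem_univ i)
            rw [if_neg hi] at this
            exact this
          have habs : |s * u i| ≤ a := by
            rw [abs_mul]
            calc |s| * |u i| ≤ ε * |u i| :=
              mul_le_mul_of_nonneg_right hs (abs_nonneg _)
            _ ≤ a := hbound i
          have h3 := neg_abs_le (s * u i)
          simp only [Pi.smul_apply, smul_eq_mul]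
          linarith
      · rw [← infoL_apply, LinearMap.map_smul, infoL_apply, hu0, smul_zero]
      · simp [← Finset.mul_sum, hsum]
    have hw₁ : v₁ + ε • u ∈ K := hmem ε (by rw [abs_of_pos hεpos])
    have hw₂ : v₁ + (-ε) • u ∈ K := hmem (-ε) (by rw [abs_neg, abs_of_pos hεpos])
    have hmid : (1/2 : ℝ) • (v₁ + ε • u) + (1/2 : ℝ) • (v₁ + (-ε) • u) = v₁ := by
      module
    have hx := h₁.2 hw₁ hw₂ ⟨1/2, 1/2, by norm_num, by norm_num, by norm_num, hmid⟩
    have : ε • u = 0 := by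
      have := hx
      have h4 : v₁ + ε • u = v₁ + 0 := by rw [this, add_zero]
      exact add_left_cancel h4
    have hu0' : u = 0 := by
      rcases smul_eq_zero.mp this with h | h
      · exact absurd h hεpos.ne'
      · exact h
    exact hne (sub_eq_zero.mp (hu ▸ hu0'))
  have hfinE : E.Finite := Set.Finite.of_finite_image (Set.toFinite _) hinj
  -- Lower bound.
  have hcomp : IsCompact K := isCompact_Pstar
  have hconv : Convex ℝ K := convex_Pstar
  have hneE : E.Nonempty := hcomp.extremePoints_nonempty ⟨wt, hwt⟩
  have hKM : closure (convexHull ℝ E) = K := closure_convexHull_extremePoints hcomp hconv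
  have hKsub : K ⊆ (affineSpan ℝ E : Set (Fin d → ℝ)) := by
    rw [← hKM]
    exact closure_minimal (convexHull_subset_affineSpan E)
      (affineSpan ℝ E).closed_of_finiteDimensional
  have hker : LinearMap.ker (infoL f) ≤ vectorSpan ℝ E := by
    intro u hu
    have hu0 : infoM f u = 0 := hu
    have hsum : ∑ i, u i = 0 := sum_eq_zero_of_infoM_eq_zero hc hfi hu0
    set a := Finset.univ.inf' Finset.univ_nonempty wt with ha
    have hapos : 0 < a := by
      rw [ha, Finset.lt_inf'_iff]
      exact fun i _ => hpos i
    set ε := a / (‖u‖ + 1) with hε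
    have hεpos : 0 < ε := div_pos hapos (by positivity)
    have hbound : ∀ i, ε * |u i| ≤ a := by
      intro i
      have h1 : |u i| ≤ ‖u‖ + 1 := by
        have := norm_le_pi_norm u i
        rw [Real.norm_eq_abs] at this
        linarith [norm_nonneg u]
      calc ε * |u i| ≤ ε * (‖u‖ + 1) := by nlinarith
      _ = a := div_mul_cancel₀ _ (by positivity)
    have hmem : wt + ε • u ∈ K := by
      refine perturb_mem hwt ?_ ?_ ?_
      · intro i
        have hai : a ≤ wt i := Finset.inf'_le wt (Finset.mem_univ i)
        have h3 := neg_abs_le (ε * u i)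
        have h4 : |ε * u i| ≤ a := by
          rw [abs_mul, abs_of_pos hεpos]; exact hbound i
        simp only [Pi.smul_apply, smul_eq_mul]
        linarith
      · rw [← infoL_apply, LinearMap.map_smul, infoL_apply, hu0, smul_zero]
      · simp [← Finset.mul_sum, hsum]
    have h1 : wt + ε • u ∈ affineSpan ℝ E := hKsub hmem
    have h2 : wt ∈ affineSpan ℝ E := hKsub hwt
    have h3 := AffineSubspace.vsub_mem_direction h1 h2
    rw [direction_affineSpan] at h3
    have h4 : ε • u ∈ vectorSpan ℝ E := by
      simpa [vsub_eq_sub] using h3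
    have h5 := (vectorSpan ℝ E).smul_mem ε⁻¹ h4
    rwa [smul_smul, inv_mul_cancel₀ hεpos.ne', one_smul] at h5
  have hrn := LinearMap.finrank_range_add_finrank_ker (infoL f)
  rw [range_infoL, Module.finrank_fin_fun] at hrn
  have hspan : spanDim f =
      Module.finrank ℝ (Submodule.span ℝ
        (Set.range fun i => Matrix.vecMulVec (f i) (f i))) := rfl
  have hmono : Module.finrank ℝ (LinearMap.ker (infoL f))
      ≤ Module.finrank ℝ (vectorSpan ℝ E) := Submodule.finrank_mono hker
  haveI := hfinE.fintype
  haveI : Nonempty E := hneE.to_subtype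
  have hcard := finrank_vectorSpan_range_add_one_le ℝ ((↑) : E → (Fin d → ℝ))
  rw [Subtype.range_coe] at hcard
  have hle : Module.finrank ℝ (vectorSpan ℝ E) + 1 ≤ E.ncard := by
    rw [← Nat.card_coe_set_eq, Nat.card_eq_fintype_card]
    exact hcard
  have hkerle : d - spanDim f ≤ Module.finrank ℝ (vectorSpan ℝ E) := by
    rw [hspan]
    omega
  constructor
  · rw [hEeq]; exact hfinE
  · rw [hEeq]
    omega
end
end
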